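/- Let X be a Banach space and suppose a cocycle U(n,m) (with U(n,m) = A(n−1)···A(m) for n > m and U(m,m) = Id) admits a tempered exponential dichotomy along a fixed orbit: there are projections P(n) on X, a constant α > 0 and positive numbers K(n) such that P(n+1)A(n) = A(n)P(n), ‖U(n,m)P(m)‖ ≤ K(m)e^{-α(n-m)} for n ≥ m, the restrictions of A(n) to the kernels of P(n) are invertible onto the kernels of P(n+1) with ‖U(n,m)(Id − P(m))‖ ≤ K(m)e^{-α(m-n)} for n ≤ m, and lim_{m→-∞} (1/|m|) ln K(m) = 0. If x : ℤ → X satisfies x(n+1) = A(n)x(n) for all n ∈ ℤ and sup_{n∈ℤ} e^{-β n}|x(n)| < ∞ for some β with |β| < α, then x(n) = 0 for all n. -/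

import Mathlib

/-- under a tempered exponential dichotomy along an orbit, the only
solution of `x(n+1) = A(n)x(n)` on `ℤ` with `sup_n e^{-βn}‖x(n)‖ < ∞` for some
`|β| < α` is the zero solution. -/
theorem stmt_3 {X : Type*} [NormedAddCommGroup X] [NormedSpace ℝ X] [CompleteSpace X]
    (A : ℤ → X →L[ℝ] X) (U : ℤ → ℤ → X →L[ℝ] X) (P : ℤ → X →L[ℝ] X)
    (α β : ℝ) (K : ℤ → ℝ)
    (hα : 0 < α) (hβ : |β| < α) (hK : ∀ n, 0 < K n)
    (hU0 : ∀ m : ℤ, U m m = 1)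
    (hUstep : ∀ n m : ℤ, m ≤ n → U (n + 1) m = (A n).comp (U n m))
    (hproj : ∀ n : ℤ, (P n).comp (P n) = P n)
    (hcomm : ∀ n : ℤ, (P (n + 1)).comp (A n) = (A n).comp (P n))
    (hs : ∀ n m : ℤ, m ≤ n →
      ‖(U n m).comp (P m)‖ ≤ K m * Real.exp (-α * ((n : ℝ) - (m : ℝ))))
    (hu : ∀ n m : ℤ, n ≤ m →
      ‖(U n m).comp (1 - P m)‖ ≤ K m * Real.exp (-α * ((m : ℝ) - (n : ℝ))))
    (hinv : ∀ n m : ℤ, n ≤ m → (U n m).comp ((1 - P m).comp (U m n)) = 1 - P n)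
    (htempneg : Filter.Tendsto (fun m : ℤ => Real.log (K m) / |(m : ℝ)|)
      Filter.atBot (nhds 0))
    (htemppos : Filter.Tendsto (fun m : ℤ => Real.log (K m) / |(m : ℝ)|)
      Filter.atTop (nhds 0))
    (x : ℤ → X)
    (hsol : ∀ n : ℤ, x (n + 1) = A n (x n))
    (hbdd : ∃ C : ℝ, ∀ n : ℤ, Real.exp (-β * (n : ℝ)) * ‖x n‖ ≤ C) :
    ∀ n : ℤ, x n = 0 := by
  obtain ⟨C, hC⟩ := hbdd
  -- growth bound on x
  have hxb : ∀ m : ℤ, ‖x m‖ ≤ C * Real.exp (β * (m : ℝ)) := by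
    intro m
    have h := hC m
    have hpos : 0 < Real.exp (-β * (m : ℝ)) := Real.exp_pos _
    have : ‖x m‖ ≤ C / Real.exp (-β * (m : ℝ)) := by
      rw [le_div_iff₀ hpos]; linarith [h]
    calc ‖x m‖ ≤ C / Real.exp (-β * (m : ℝ)) := this
      _ = C * Real.exp (β * (m : ℝ)) := by
          rw [div_eq_mul_inv, ← Real.exp_neg]; ring_nf
  -- evolution carries x
  have evol : ∀ m n : ℤ, m ≤ n → U n m (x m) = x n := by
    intro m n
    refine Int.le_induction (motive := fun n _ => U n m (x m) = x n) ?_ ?_ n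
    · simp [hU0]
    · intro k hk ih
      rw [hUstep k m hk]
      simp only [ContinuousLinearMap.comp_apply, ih]
      exact (hsol k).symm
  -- commutation of U with P
  have hcommU : ∀ m n : ℤ, m ≤ n → (U n m).comp (P m) = (P n).comp (U n m) := by
    intro m n
    refine Int.le_induction (motive := fun n _ => (U n m).comp (P m) = (P n).comp (U n m)) ?_ ?_ n
    · show (U m m).comp (P m) = (P m).comp (U m m)
      rw [hU0]; ext v; simp
    · intro k hk ih
      rw [hUstep k m hk]
      ext v
      have h1 : U k m (P m v) = P k (U k m v) := by
        have := congrArg (fun T : X →L[ℝ] X => T v) ih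
        simpa using this
      have h2 : P (k + 1) (A k (U k m v)) = A k (P k (U k m v)) := by
        have := congrArg (fun T : X →L[ℝ] X => T (U k m v)) (hcomm k)
        simpa using this
      simp only [ContinuousLinearMap.comp_apply, h1, h2]
  have hβ1 : -α < β := (abs_lt.mp hβ).1
  have hβ2 : β < α := (abs_lt.mp hβ).2
  intro n
  -- stable part vanishes
  have hstable : P n (x n) = 0 := by
    have hbound : ∀ m : ℤ, m ≤ n →
        ‖P n (x n)‖ ≤ C * Real.exp (Real.log (K m) + (α + β) * (m : ℝ) - α * (n : ℝ)) := by
      intro m hmn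
      have h1 : P n (x n) = ((U n m).comp (P m)) (x m) := by
        rw [hcommU m n hmn]
        simp [ContinuousLinearMap.comp_apply, evol m n hmn]
      have h2 : ‖P n (x n)‖ ≤ ‖(U n m).comp (P m)‖ * ‖x m‖ := by
        rw [h1]; exact (U n m |>.comp (P m)).le_opNorm _
      have h3 : ‖(U n m).comp (P m)‖ * ‖x m‖ ≤
          (K m * Real.exp (-α * ((n : ℝ) - (m : ℝ)))) * (C * Real.exp (β * (m : ℝ))) := by
        exact mul_le_mul (hs n m hmn) (hxb m) (norm_nonneg _)
          (mul_nonneg (hK m).le (Real.exp_pos _).le)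
      have h4 : (K m * Real.exp (-α * ((n : ℝ) - (m : ℝ)))) * (C * Real.exp (β * (m : ℝ)))
          = C * Real.exp (Real.log (K m) + (α + β) * (m : ℝ) - α * (n : ℝ)) := by
        rw [show Real.log (K m) + (α + β) * (m : ℝ) - α * (n : ℝ)
            = Real.log (K m) + (-α * ((n : ℝ) - (m : ℝ)) + β * (m : ℝ)) by ring,
          Real.exp_add, Real.exp_add, Real.exp_log (hK m)]
        ring
      linarith [h2.trans (h3.trans_eq h4)]
    -- the bound tends to 0 along atBot
    have hε : 0 < (α + β) / 2 := by linarith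
    have hlin : Filter.Tendsto (fun m : ℤ => Real.log (K m) + (α + β) * (m : ℝ))
        Filter.atBot Filter.atBot := by
      apply Filter.tendsto_atBot_mono' _ _
        (show Filter.Tendsto (fun m : ℤ => ((α + β) / 2) * (m : ℝ)) Filter.atBot Filter.atBot from
          ((tendsto_intCast_atBot_iff (R := ℝ)).2 Filter.tendsto_id).const_mul_atBot hε)
      have hev1 : ∀ᶠ m : ℤ in Filter.atBot, Real.log (K m) / |(m : ℝ)| ≤ (α + β) / 2 :=
        htempneg.eventually_le_const hε
      have hev2 : ∀ᶠ m : ℤ in Filter.atBot, m ≤ -1 := Filter.eventually_le_atBot (-1)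
      filter_upwards [hev1, hev2] with m h1 h2
      have hm : (m : ℝ) ≤ -1 := by exact_mod_cast h2
      have habs : |(m : ℝ)| = -(m : ℝ) := abs_of_neg (by linarith)
      rw [habs] at h1
      have hmpos : (0:ℝ) < -(m : ℝ) := by linarith
      have : Real.log (K m) ≤ ((α + β) / 2) * (-(m : ℝ)) := by
        rwa [div_le_iff₀ hmpos] at h1
      linarith
    have htend : Filter.Tendsto
        (fun m : ℤ => C * Real.exp (Real.log (K m) + (α + β) * (m : ℝ) - α * (n : ℝ)))
        Filter.atBot (nhds 0) := by
      have := (Real.tendsto_exp_atBot.comp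
        (Filter.tendsto_atBot_add_const_right _ (-(α * (n : ℝ))) hlin)).const_mul C
      simpa [Function.comp, sub_eq_add_neg, mul_zero] using this
    have hle : ‖P n (x n)‖ ≤ 0 := by
      apply ge_of_tendsto htend
      filter_upwards [Filter.eventually_le_atBot n] with m hm
      exact hbound m hm
    exact norm_le_zero_iff.mp hle
  -- unstable part vanishes
  have hunstable : (1 - P n) (x n) = 0 := by
    have hbound : ∀ m : ℤ, n ≤ m →
        ‖(1 - P n) (x n)‖ ≤ C * Real.exp (Real.log (K m) + (β - α) * (m : ℝ) + α * (n : ℝ)) := by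
      intro m hnm
      have h1 : (1 - P n) (x n) = ((U n m).comp (1 - P m)) (x m) := by
        have := congrArg (fun T : X →L[ℝ] X => T (x n)) (hinv n m hnm)
        simp only [ContinuousLinearMap.comp_apply] at this ⊢
        rw [← this, evol n m hnm]
      have h2 : ‖(1 - P n) (x n)‖ ≤ ‖(U n m).comp (1 - P m)‖ * ‖x m‖ := by
        rw [h1]; exact ((U n m).comp (1 - P m)).le_opNorm _
      have h3 : ‖(U n m).comp (1 - P m)‖ * ‖x m‖ ≤
          (K m * Real.exp (-α * ((m : ℝ) - (n : ℝ)))) * (C * Real.exp (β * (m : ℝ))) := by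
        exact mul_le_mul (hu n m hnm) (hxb m) (norm_nonneg _)
          (mul_nonneg (hK m).le (Real.exp_pos _).le)
      have h4 : (K m * Real.exp (-α * ((m : ℝ) - (n : ℝ)))) * (C * Real.exp (β * (m : ℝ)))
          = C * Real.exp (Real.log (K m) + (β - α) * (m : ℝ) + α * (n : ℝ)) := by
        rw [show Real.log (K m) + (β - α) * (m : ℝ) + α * (n : ℝ)
            = Real.log (K m) + (-α * ((m : ℝ) - (n : ℝ)) + β * (m : ℝ)) by ring,
          Real.exp_add, Real.exp_add, Real.exp_log (hK m)]
        ring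
      linarith [h2.trans (h3.trans_eq h4)]
    have hε : 0 < (α - β) / 2 := by linarith
    have hlin : Filter.Tendsto (fun m : ℤ => Real.log (K m) + (β - α) * (m : ℝ))
        Filter.atTop Filter.atBot := by
      apply Filter.tendsto_atBot_mono' _ _
        (show Filter.Tendsto (fun m : ℤ => (-((α - β) / 2)) * (m : ℝ)) Filter.atTop Filter.atBot from
          (tendsto_intCast_atTop_atTop (R := ℝ)).const_mul_atTop_of_neg (by linarith))
      have hev1 : ∀ᶠ m : ℤ in Filter.atTop, Real.log (K m) / |(m : ℝ)| ≤ (α - β) / 2 :=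
        htemppos.eventually_le_const hε
      have hev2 : ∀ᶠ m : ℤ in Filter.atTop, 1 ≤ m := Filter.eventually_ge_atTop 1
      filter_upwards [hev1, hev2] with m h1 h2
      have hm : (1:ℝ) ≤ (m : ℝ) := by exact_mod_cast h2
      have habs : |(m : ℝ)| = (m : ℝ) := abs_of_pos (by linarith)
      rw [habs] at h1
      have hmpos : (0:ℝ) < (m : ℝ) := by linarith
      have : Real.log (K m) ≤ ((α - β) / 2) * (m : ℝ) := by
        rwa [div_le_iff₀ hmpos] at h1
      nlinarith
    have htend : Filter.Tendsto
        (fun m : ℤ => C * Real.exp (Real.log (K m) + (β - α) * (m : ℝ) + α * (n : ℝ)))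
        Filter.atTop (nhds 0) := by
      have := (Real.tendsto_exp_atBot.comp
        (Filter.tendsto_atBot_add_const_right _ (α * (n : ℝ)) hlin)).const_mul C
      simpa [Function.comp, mul_zero] using this
    have hle : ‖(1 - P n) (x n)‖ ≤ 0 := by
      apply ge_of_tendsto htend
      filter_upwards [Filter.eventually_ge_atTop n] with m hm
      exact hbound m hm
    exact norm_le_zero_iff.mp hle
  have : x n - P n (x n) = 0 := by
    simpa [ContinuousLinearMap.sub_apply] using hunstable
  rw [hstable] at this
  simpa using this
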